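/- Let b ∈ ℂ^N with Σ_{n=0}^{N−1} |b_n|² = N, let z = [b; 0_N] ∈ ℂ^{2N} be its zero-padding, and let Z = F_{2N} z be the unitary 2N-point DFT of z. Then the aperiodic autocorrelation sidelobes of b all vanish, i.e., C_b(τ) = 0 for every 1 ≤ τ ≤ N−1, if and only if |Z_k| = 1/√2 for every 0 ≤ k ≤ 2N−1. -/

import Mathlib

open Finset

/-- Aperiodic cross-correlation of two length-`M` complex sequences at integer shift `τ`. -/
noncomputable def acc (M : ℕ) (a b : ℕ → ℂ) (τ : ℤ) : ℂ :=
  if 0 ≤ τ then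
    ∑ n ∈ Finset.range (M - τ.toNat), a n * (starRingEnd ℂ) (b (n + τ.toNat))
  else
    ∑ n ∈ Finset.range (M - (-τ).toNat), a (n + (-τ).toNat) * (starRingEnd ℂ) (b n)

/-- Unitary `N`-point DFT: `(F_N x) k = (1/√N) Σ_n x n · exp(−2πi·k·n/N)`. -/
noncomputable def dft (N : ℕ) (x : ℕ → ℂ) : ℕ → ℂ :=
  fun k => (1 / (Real.sqrt N : ℂ)) *
    ∑ n ∈ Finset.range N, x n * Complex.exp (-(2 * Real.pi * Complex.I * k * n) / N)

/-! ### Auxiliary machinery -/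

/-- The character `t ↦ exp(2πi t / M)`. -/
noncomputable def ee (M : ℕ) (t : ℤ) : ℂ := Complex.exp (2 * Real.pi * Complex.I * t / M)

lemma ee_add (M : ℕ) (s t : ℤ) : ee M (s + t) = ee M s * ee M t := by
  rw [ee, ee, ee, ← Complex.exp_add]; congr 1; push_cast; ring

lemma ee_zero (M : ℕ) : ee M 0 = 1 := by simp [ee]

lemma conj_ee (M : ℕ) (t : ℤ) : (starRingEnd ℂ) (ee M t) = ee M (-t) := by
  rw [ee, ee, ← Complex.exp_conj]; congr 1
  simp only [map_div₀, map_mul, map_ofNat, Complex.conj_I, Complex.conj_ofReal,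
    map_intCast, Complex.conj_natCast]
  push_cast
  ring

lemma ee_pow (M : ℕ) (s : ℤ) (k : ℕ) : ee M (k * s) = (ee M s) ^ k := by
  rw [ee, ee, ← Complex.exp_nat_mul]; congr 1; push_cast; ring

lemma ee_int_mul (M : ℕ) (hM : 0 < M) (c : ℤ) : ee M (M * c) = 1 := by
  have hM0 : (M : ℂ) ≠ 0 := by exact_mod_cast hM.ne'
  rw [ee]
  have : (2 * Real.pi * Complex.I * ((M : ℤ) * c : ℤ) / M) = c * (2 * Real.pi * Complex.I) := by
    field_simp; push_cast; ring
  rw [this, Complex.exp_int_mul_two_pi_mul_I]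

lemma ee_sum (M : ℕ) (hM : 0 < M) (s : ℤ) :
    ∑ k ∈ range M, ee M (k * s) = if (M : ℤ) ∣ s then (M : ℂ) else 0 := by
  simp only [ee_pow]
  by_cases hd : (M : ℤ) ∣ s
  · rw [if_pos hd]
    obtain ⟨c, hc⟩ := hd
    have h1 : ee M s = 1 := by rw [hc]; exact ee_int_mul M hM c
    simp [h1]
  · rw [if_neg hd]
    have hM0 : (M : ℂ) ≠ 0 := by exact_mod_cast hM.ne'
    have h2 : (2 * Real.pi * Complex.I) ≠ 0 := by
      simp [Real.pi_ne_zero, Complex.I_ne_zero]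
    have h1 : ee M s ≠ 1 := by
      intro hone
      rw [ee, Complex.exp_eq_one_iff] at hone
      obtain ⟨n, hn⟩ := hone
      apply hd
      refine ⟨n, mul_comm (M:ℤ) n ▸ ?_⟩
      have h3 : 2 * Real.pi * Complex.I * s = 2 * Real.pi * Complex.I * (n * M) := by
        field_simp at hn; linear_combination (2 * Real.pi * Complex.I) * hn
      have h4 := mul_left_cancel₀ h2 h3
      exact_mod_cast h4
    rw [geom_sum_eq h1]
    have h5 : ee M s ^ M = 1 := by
      rw [← ee_pow]
      have h6 : ((M : ℕ) : ℤ) * s = (M : ℤ) * s := by push_cast; ring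
      rw [h6]
      exact ee_int_mul M hM s
    rw [h5]; simp

/-- The (scaled) power spectrum numerator. -/
noncomputable def Dd (N : ℕ) (b : ℕ → ℂ) (k : ℕ) : ℂ :=
  ∑ n ∈ range N, ∑ m ∈ range N, b n * (starRingEnd ℂ) (b m) * ee (2*N) (k * ((m:ℤ) - n))

lemma Z_eq (N : ℕ) (b z : ℕ → ℂ) (hz : z = fun n => if n < N then b n else 0) (k : ℕ) :
    dft (2*N) z k = (1 / ((Real.sqrt ((2*N : ℕ) : ℝ)) : ℂ)) * ∑ n ∈ range N, b n * ee (2*N) (-(k*n)) := by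
  rw [dft]
  congr 1
  rw [← Finset.sum_subset (Finset.range_subset_range.2 (by omega : N ≤ 2*N))]
  · apply Finset.sum_congr rfl
    intro n hn
    rw [Finset.mem_range] at hn
    rw [hz]; simp only [if_pos hn]
    congr 1
    rw [ee]; congr 1; push_cast; ring
  · intro n _ hn
    rw [Finset.mem_range, not_lt] at hn
    rw [hz]; simp [Nat.not_lt.2 hn]

lemma D_eq (N : ℕ) (hN : 0 < N) (b z : ℕ → ℂ) (hz : z = fun n => if n < N then b n else 0) (k : ℕ) :
    ((2*N : ℕ) : ℂ) * (dft (2*N) z k * (starRingEnd ℂ) (dft (2*N) z k)) = Dd N b k := by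
  rw [Z_eq N b z hz k]
  rw [map_mul, map_sum]
  have hconj : ∀ m ∈ range N, (starRingEnd ℂ) (b m * ee (2*N) (-(k*m)))
      = (starRingEnd ℂ) (b m) * ee (2*N) (k*m) := by
    intro m _
    rw [map_mul, conj_ee, neg_neg]
  rw [Finset.sum_congr rfl hconj]
  set c : ℂ := ((Real.sqrt ((2*N : ℕ) : ℝ)) : ℂ) with hcdef
  have hc : (starRingEnd ℂ) (1 / c) = 1 / c := by
    rw [map_div₀, map_one, hcdef, Complex.conj_ofReal]
  rw [hc]
  have hcsq : c * c = ((2*N:ℕ) : ℂ) := by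
    rw [hcdef, ← Complex.ofReal_mul, Real.mul_self_sqrt (by positivity)]
    norm_cast
  have hne : c ≠ 0 := by
    rw [hcdef]
    simp only [ne_eq, Complex.ofReal_eq_zero]
    have : (0:ℝ) < ((2*N:ℕ):ℝ) := by positivity
    positivity
  have key : ((2*N:ℕ):ℂ) * (1 / c) * (1 / c) = 1 := by
    have h2 : (2 * (N:ℂ)) ≠ 0 := by
      simp [Nat.cast_ne_zero, hN.ne']
    field_simp [hcsq]
    rw [sq, hcsq]
  have hprod : (∑ n ∈ range N, b n * ee (2*N) (-(k*n))) *
      (∑ m ∈ range N, (starRingEnd ℂ) (b m) * ee (2*N) (k*m)) = Dd N b k := by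
    rw [Finset.sum_mul_sum, Dd]
    apply Finset.sum_congr rfl
    intro n _
    apply Finset.sum_congr rfl
    intro m _
    have harg : (k:ℤ) * ((m:ℤ) - n) = -(k*n) + k*m := by ring
    rw [harg, ee_add]
    ring
  calc ((2*N:ℕ):ℂ) * ((1/c * ∑ n ∈ range N, b n * ee (2*N) (-(k*n))) *
        (1/c * ∑ m ∈ range N, (starRingEnd ℂ) (b m) * ee (2*N) (k*m)))
      = (((2*N:ℕ):ℂ) * (1/c) * (1/c)) * ((∑ n ∈ range N, b n * ee (2*N) (-(k*n))) *
        (∑ m ∈ range N, (starRingEnd ℂ) (b m) * ee (2*N) (k*m))) := by ring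
    _ = Dd N b k := by rw [key, one_mul, hprod]

lemma sum_range_if (N t : ℕ) (f : ℕ → ℂ) :
    ∑ m ∈ range N, (if t + m < N then f m else 0) = ∑ m ∈ range (N - t), f m := by
  rw [← Finset.sum_subset (Finset.range_subset_range.2 (Nat.sub_le N t))]
  · apply Finset.sum_congr rfl
    intro m hm; rw [mem_range] at hm; rw [if_pos (by omega)]
  · intro m hm hm2; rw [mem_range] at hm hm2; rw [if_neg (by omega)]

lemma delta_split (N t n m : ℕ) (hN : 0 < N) (hn : n < N) (hm : m < N) (ht : t < 2*N) :
    (if ((2*N:ℕ):ℤ) ∣ ((t:ℤ) + m - n) then ((2*N:ℕ):ℂ) else 0)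
    = (if n = t + m then ((2*N:ℕ):ℂ) else 0) + (if t + m = n + 2*N then ((2*N:ℕ):ℂ) else 0) := by
  by_cases h1 : n = t + m
  · have hdvd : ((2*N:ℕ):ℤ) ∣ ((t:ℤ) + m - n) := by
      have hv : ((t:ℤ) + m - n) = 0 := by omega
      simp [hv]
    rw [if_pos hdvd, if_pos h1, if_neg (show ¬(t + m = n + 2*N) by omega)]
    ring
  · by_cases hb : t + m = n + 2*N
    · have hdvd : ((2*N:ℕ):ℤ) ∣ ((t:ℤ) + m - n) := by
        refine ⟨1, ?_⟩
        push_cast; omega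
      rw [if_pos hdvd, if_neg h1, if_pos hb]; ring
    · have hdvd : ¬ ((2*N:ℕ):ℤ) ∣ ((t:ℤ) + m - n) := by
        rintro ⟨c, hc⟩
        push_cast at hc
        have hN' : (0:ℤ) < (N:ℤ) := by exact_mod_cast hN
        have hn' : (n:ℤ) < N := by exact_mod_cast hn
        have hm' : (m:ℤ) < N := by exact_mod_cast hm
        have ht' : (t:ℤ) < 2*N := by exact_mod_cast ht
        have h0n : (0:ℤ) ≤ (n:ℤ) := Int.ofNat_nonneg n
        have h0m : (0:ℤ) ≤ (m:ℤ) := Int.ofNat_nonneg m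
        have h0t : (0:ℤ) ≤ (t:ℤ) := Int.ofNat_nonneg t
        have hc0 : 0 ≤ c := by
          by_contra h
          push_neg at h
          have h' : c ≤ -1 := by omega
          have hmul : 2*(N:ℤ)*c ≤ 2*(N:ℤ)*(-1) := by
            apply mul_le_mul_of_nonneg_left h' (by linarith)
          linarith
        have hc1 : c ≤ 1 := by
          by_contra h
          push_neg at h
          have h' : (2:ℤ) ≤ c := by omega
          have hmul : 2*(N:ℤ)*2 ≤ 2*(N:ℤ)*c := by
            apply mul_le_mul_of_nonneg_left h' (by linarith)
          linarith
        interval_cases c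
        · apply h1
          have : (t:ℤ) + m - n = 0 := by rw [hc]; ring
          omega
        · apply hb
          have : (t:ℤ) + m - n = 2*N := by rw [hc]; ring
          omega
      rw [if_neg hdvd, if_neg h1, if_neg hb]; ring

lemma core (N : ℕ) (hN : 0 < N) (b : ℕ → ℂ) (t : ℕ) (ht : t < 2*N) :
    ∑ k ∈ range (2*N), Dd N b k * ee (2*N) (k * t)
    = ((2*N:ℕ):ℂ) * ((∑ m ∈ range (N - t), b (t+m) * (starRingEnd ℂ) (b m)) +
       (∑ n ∈ range (N - (2*N - t)), b n * (starRingEnd ℂ) (b (n + (2*N - t))))) := by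
  have h2N : 0 < 2*N := by omega
  have step1 : ∑ k ∈ range (2*N), Dd N b k * ee (2*N) (k * t)
      = ∑ n ∈ range N, ∑ m ∈ range N, b n * (starRingEnd ℂ) (b m) *
          (if ((2*N:ℕ):ℤ) ∣ ((t:ℤ) + m - n) then ((2*N:ℕ):ℂ) else 0) := by
    simp only [Dd, Finset.sum_mul]
    rw [Finset.sum_comm]
    apply Finset.sum_congr rfl
    intro n _
    rw [Finset.sum_comm]
    apply Finset.sum_congr rfl
    intro m _
    rw [← ee_sum (2*N) h2N ((t:ℤ) + m - n), Finset.mul_sum]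
    apply Finset.sum_congr rfl
    intro k _
    have harg : (k:ℤ) * ((t:ℤ) + m - n) = k * ((m:ℤ) - n) + k * t := by ring
    rw [harg, ee_add]
    ring
  rw [step1]
  have step2 : ∀ n ∈ range N, ∀ m ∈ range N,
      b n * (starRingEnd ℂ) (b m) * (if ((2*N:ℕ):ℤ) ∣ ((t:ℤ) + m - n) then ((2*N:ℕ):ℂ) else 0)
      = b n * (starRingEnd ℂ) (b m) * (if n = t + m then ((2*N:ℕ):ℂ) else 0)
        + b n * (starRingEnd ℂ) (b m) * (if t + m = n + 2*N then ((2*N:ℕ):ℂ) else 0) := by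
    intro n hn m hm
    rw [mem_range] at hn hm
    rw [delta_split N t n m hN hn hm ht]
    ring
  rw [Finset.sum_congr rfl (fun n hn => Finset.sum_congr rfl (fun m hm => step2 n hn m hm))]
  simp only [Finset.sum_add_distrib]
  have hfirst : ∑ n ∈ range N, ∑ m ∈ range N,
      b n * (starRingEnd ℂ) (b m) * (if n = t + m then ((2*N:ℕ):ℂ) else 0)
      = ((2*N:ℕ):ℂ) * ∑ m ∈ range (N - t), b (t+m) * (starRingEnd ℂ) (b m) := by
    rw [Finset.sum_comm]
    have inner1 : ∀ m, m ∈ range N →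
        (∑ n ∈ range N, b n * (starRingEnd ℂ) (b m) * (if n = t + m then ((2*N:ℕ):ℂ) else 0))
        = (if t + m < N then ((2*N:ℕ):ℂ) * (b (t+m) * (starRingEnd ℂ) (b m)) else 0) := by
      intro m _
      have hterm : ∀ n ∈ range N, b n * (starRingEnd ℂ) (b m) * (if n = t + m then ((2*N:ℕ):ℂ) else 0)
          = (if n = t + m then ((2*N:ℕ):ℂ) * (b n * (starRingEnd ℂ) (b m)) else 0) := by
        intro n _
        by_cases h : n = t + m
        · simp only [if_pos h]; ring
        · simp only [if_neg h, mul_zero]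
      rw [Finset.sum_congr rfl hterm,
        Finset.sum_ite_eq' (range N) (t+m) (fun n => ((2*N:ℕ):ℂ) * (b n * (starRingEnd ℂ) (b m)))]
      simp [Finset.mem_range]
    rw [Finset.sum_congr rfl inner1, sum_range_if N t
      (fun m => ((2*N:ℕ):ℂ) * (b (t+m) * (starRingEnd ℂ) (b m))), Finset.mul_sum]
  have hsecond : ∑ n ∈ range N, ∑ m ∈ range N,
      b n * (starRingEnd ℂ) (b m) * (if t + m = n + 2*N then ((2*N:ℕ):ℂ) else 0)
      = ((2*N:ℕ):ℂ) * ∑ n ∈ range (N - (2*N - t)), b n * (starRingEnd ℂ) (b (n + (2*N - t))) := by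
    have inner2 : ∀ n, n ∈ range N →
        (∑ m ∈ range N, b n * (starRingEnd ℂ) (b m) * (if t + m = n + 2*N then ((2*N:ℕ):ℂ) else 0))
        = (if (2*N - t) + n < N then ((2*N:ℕ):ℂ) * (b n * (starRingEnd ℂ) (b (n + (2*N - t)))) else 0) := by
      intro n _
      have hterm : ∀ m ∈ range N, b n * (starRingEnd ℂ) (b m) * (if t + m = n + 2*N then ((2*N:ℕ):ℂ) else 0)
          = (if m = n + (2*N - t) then ((2*N:ℕ):ℂ) * (b n * (starRingEnd ℂ) (b m)) else 0) := by
        intro m _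
        have hiff : (t + m = n + 2*N) ↔ (m = n + (2*N - t)) := by omega
        by_cases h : m = n + (2*N - t)
        · rw [if_pos (hiff.2 h), if_pos h]; ring
        · rw [if_neg (fun hh => h (hiff.1 hh)), if_neg h, mul_zero]
      rw [Finset.sum_congr rfl hterm,
        Finset.sum_ite_eq' (range N) (n + (2*N - t)) (fun m => ((2*N:ℕ):ℂ) * (b n * (starRingEnd ℂ) (b m)))]
      simp only [Finset.mem_range]
      by_cases h : n + (2*N - t) < N
      · rw [if_pos h, if_pos (by omega)]
      · rw [if_neg h, if_neg (by omega)]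
    rw [Finset.sum_congr rfl inner2, sum_range_if N (2*N - t)
      (fun n => ((2*N:ℕ):ℂ) * (b n * (starRingEnd ℂ) (b (n + (2*N - t))))), Finset.mul_sum]
  rw [hfirst, hsecond, mul_add]

lemma acc_nat (N : ℕ) (b : ℕ → ℂ) (τ : ℕ) :
    acc N b b (τ:ℤ) = ∑ n ∈ range (N - τ), b n * (starRingEnd ℂ) (b (n+τ)) := by
  rw [acc, if_pos (Int.ofNat_nonneg τ)]
  simp

lemma conj_acc (N : ℕ) (b : ℕ → ℂ) (τ : ℕ) :
    (starRingEnd ℂ) (acc N b b (τ:ℤ)) = ∑ m ∈ range (N - τ), b (τ+m) * (starRingEnd ℂ) (b m) := by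
  rw [acc_nat, map_sum]
  apply Finset.sum_congr rfl
  intro m _
  rw [map_mul, Complex.conj_conj]
  rw [mul_comm, add_comm]

theorem can_criterion_zero_sidelobes_iff_flat_padded_spectrum
    (N : ℕ) (hN : 0 < N) (b : ℕ → ℂ)
    (hb : ∑ n ∈ Finset.range N, ‖b n‖ ^ 2 = (N : ℝ))
    (z : ℕ → ℂ) (hz : z = fun n => if n < N then b n else 0)
    (Z : ℕ → ℂ) (hZ : Z = dft (2 * N) z) :
    (∀ τ : ℕ, 1 ≤ τ → τ ≤ N - 1 → acc N b b (τ : ℤ) = 0) ↔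
    (∀ k < 2 * N, ‖Z k‖ = 1 / Real.sqrt 2) := by
  subst hZ
  have h2N : 0 < 2*N := by omega
  have h2Nc : ((2*N:ℕ):ℂ) ≠ 0 := by exact_mod_cast h2N.ne'
  have hbsum : ∑ m ∈ range N, b m * (starRingEnd ℂ) (b m) = (N:ℂ) := by
    have h1 : ∀ m ∈ range N, b m * (starRingEnd ℂ) (b m) = ((‖b m‖ ^ 2 : ℝ) : ℂ) := by
      intro m _
      rw [Complex.mul_conj, Complex.normSq_eq_norm_sq]
    rw [Finset.sum_congr rfl h1, ← Complex.ofReal_sum, hb]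
    norm_cast
  constructor
  · -- zero sidelobes → flat spectrum
    intro hA k hk
    have hS0 : ∑ k' ∈ range (2*N), Dd N b k' = ((2*N:ℕ):ℂ) * N := by
      have h := core N hN b 0 h2N
      rw [show N - (2*N - 0) = 0 from by omega] at h
      simp only [Nat.cast_zero, mul_zero, ee_zero, mul_one, Nat.sub_zero, Nat.zero_add,
        Finset.range_zero, Finset.sum_empty, add_zero] at h
      rw [h, hbsum]
    have hSt : ∀ t:ℕ, 1 ≤ t → t < 2*N →
        ∑ k' ∈ range (2*N), Dd N b k' * ee (2*N) (k' * t) = 0 := by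
      intro t h1t ht
      rw [core N hN b t ht]
      rcases lt_trichotomy t N with h|h|h
      · have hacc := hA t h1t (by omega)
        have hc : ∑ m ∈ range (N - t), b (t+m) * (starRingEnd ℂ) (b m) = 0 := by
          rw [← conj_acc, hacc, map_zero]
        have hr : N - (2*N - t) = 0 := by omega
        rw [hc, hr]
        simp
      · have hr1 : N - t = 0 := by omega
        have hr2 : N - (2*N - t) = 0 := by omega
        rw [hr1, hr2]
        simp
      · have hr1 : N - t = 0 := by omega
        have hacc := hA (2*N - t) (by omega) (by omega)
        have hc : ∑ n ∈ range (N - (2*N - t)), b n * (starRingEnd ℂ) (b (n + (2*N - t))) = 0 := by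
          rw [← acc_nat N b (2*N - t)]
          exact hacc
        rw [hr1, hc]
        simp
    -- Fourier inversion at k
    have hT1 : ∑ t ∈ range (2*N),
        (∑ k' ∈ range (2*N), Dd N b k' * ee (2*N) (k' * t)) * ee (2*N) (-(k*t))
        = ((2*N:ℕ):ℂ) * N := by
      rw [Finset.sum_eq_single_of_mem 0 (Finset.mem_range.2 h2N)]
      · simp only [Nat.cast_zero, mul_zero, ee_zero, mul_one, neg_zero]
        exact hS0
      · intro t htm htne
        rw [hSt t (Nat.one_le_iff_ne_zero.2 htne) (Finset.mem_range.1 htm), zero_mul]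
    have hT2 : ∑ t ∈ range (2*N),
        (∑ k' ∈ range (2*N), Dd N b k' * ee (2*N) (k' * t)) * ee (2*N) (-(k*t))
        = ((2*N:ℕ):ℂ) * Dd N b k := by
      have hsw : ∑ t ∈ range (2*N),
          (∑ k' ∈ range (2*N), Dd N b k' * ee (2*N) (k' * t)) * ee (2*N) (-(k*t))
          = ∑ k' ∈ range (2*N), Dd N b k' * ∑ t ∈ range (2*N), ee (2*N) (t * ((k':ℤ) - k)) := by
        simp only [Finset.sum_mul]
        rw [Finset.sum_comm]
        apply Finset.sum_congr rfl
        intro k' _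
        rw [Finset.mul_sum]
        apply Finset.sum_congr rfl
        intro t _
        have harg : (t:ℤ) * ((k':ℤ) - k) = k' * t + -(k*t) := by ring
        rw [harg, ee_add]
        ring
      rw [hsw]
      have hdel : ∀ k' ∈ range (2*N), Dd N b k' * ∑ t ∈ range (2*N), ee (2*N) (t * ((k':ℤ) - k))
          = (if k' = k then ((2*N:ℕ):ℂ) * Dd N b k' else 0) := by
        intro k' hk'
        rw [mem_range] at hk'
        rw [ee_sum (2*N) h2N ((k':ℤ) - k)]
        by_cases h : k' = k
        · rw [if_pos (by simp [h]), if_pos h]; ring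
        · rw [if_neg ?_, if_neg h, mul_zero]
          rintro hdvd
          have habs := Int.eq_zero_of_abs_lt_dvd hdvd ?_
          · have : k' = k := by omega
            exact h this
          · have hk'2 : (k':ℤ) < 2*N := by exact_mod_cast hk'
            have hk2 : (k:ℤ) < 2*N := by exact_mod_cast hk
            have h0k : (0:ℤ) ≤ (k:ℤ) := Int.ofNat_nonneg k
            have h0k' : (0:ℤ) ≤ (k':ℤ) := Int.ofNat_nonneg k'
            have : ((2*N:ℕ):ℤ) = 2*(N:ℤ) := by push_cast; ring
            rw [this]
            rw [abs_lt]
            constructor <;> linarith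
      rw [Finset.sum_congr rfl hdel, Finset.sum_ite_eq' (range (2*N)) k
        (fun k' => ((2*N:ℕ):ℂ) * Dd N b k'), if_pos (Finset.mem_range.2 hk)]
    have hDk : Dd N b k = (N:ℂ) := mul_left_cancel₀ h2Nc (hT2.symm.trans hT1)
    have hzz := D_eq N hN b z hz k
    rw [hDk] at hzz
    have hmul : dft (2*N) z k * (starRingEnd ℂ) (dft (2*N) z k) = 1/2 := by
      apply mul_left_cancel₀ h2Nc
      rw [hzz]
      push_cast
      ring
    have hns : Complex.normSq (dft (2*N) z k) = 1/2 := by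
      have hmc := Complex.mul_conj (dft (2*N) z k)
      rw [hmul] at hmc
      have : ((Complex.normSq (dft (2*N) z k) : ℝ) : ℂ) = ((1/2 : ℝ) : ℂ) := by
        rw [← hmc]; norm_num
      exact_mod_cast this
    rw [Complex.norm_def, hns, one_div, Real.sqrt_inv, one_div]
  · -- flat spectrum → zero sidelobes
    intro hflat τ h1τ hτN
    have hτ2N : τ < 2*N := by omega
    have hP : ∀ k ∈ range (2*N), Dd N b k = (N:ℂ) := by
      intro k hk
      rw [← D_eq N hN b z hz k]
      have habs := hflat k (mem_range.1 hk)
      have hns : Complex.normSq (dft (2*N) z k) = 1/2 := by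
        rw [Complex.normSq_eq_norm_sq, habs, div_pow, one_pow,
          Real.sq_sqrt (by norm_num : (0:ℝ) ≤ 2)]
      have hmc : dft (2*N) z k * (starRingEnd ℂ) (dft (2*N) z k) = ((1/2 : ℝ) : ℂ) := by
        rw [Complex.mul_conj, hns]
      rw [hmc]
      push_cast
      ring
    have hzero : ∑ k ∈ range (2*N), Dd N b k * ee (2*N) (k * τ) = 0 := by
      rw [Finset.sum_congr rfl (fun k hk => by rw [hP k hk])]
      rw [← Finset.mul_sum, ee_sum (2*N) h2N τ, if_neg ?_, mul_zero]
      intro hdvd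
      have hpos : (0:ℤ) < ((2*N:ℕ):ℤ) := by exact_mod_cast h2N
      have hτpos : (0:ℤ) < (τ:ℤ) := by exact_mod_cast h1τ
      have hle := Int.le_of_dvd hτpos hdvd
      have hτlt : (τ:ℤ) < ((2*N:ℕ):ℤ) := by exact_mod_cast hτ2N
      omega
    rw [core N hN b τ hτ2N] at hzero
    rw [show N - (2*N - τ) = 0 from by omega] at hzero
    simp only [Finset.range_zero, Finset.sum_empty, add_zero] at hzero
    have hsum0 : ∑ m ∈ range (N - τ), b (τ+m) * (starRingEnd ℂ) (b m) = 0 := by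
      rcases mul_eq_zero.1 hzero with h|h
      · exact absurd h h2Nc
      · exact h
    have hconj0 : (starRingEnd ℂ) (acc N b b (τ:ℤ)) = 0 := by
      rw [conj_acc]
      exact hsum0
    calc acc N b b (τ:ℤ) = (starRingEnd ℂ) ((starRingEnd ℂ) (acc N b b (τ:ℤ))) :=
          (Complex.conj_conj _).symm
      _ = 0 := by rw [hconj0, map_zero]
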